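/- Let p be an odd prime with 3 | (p-1), let ω ∈ F_p be a primitive third root of unity, and let C be the cyclic code of length 3p over F_p with generator polynomial g(x) = (x-1)^4 (x-ω)^2 (x-ω^2)^2 dividing x^{3p} - 1. Then the minimum Hamming distance of C equals 5. -/
import Mathlib


open Polynomial

/-- The cyclic code of length `n` over `F` with generator polynomial `g`
(with `g ∣ x^n - 1`), viewed as the set of coefficient vectors `c` whose
associated polynomial is divisible by `g`. -/
def cyclicCode {F : Type*} [Field F] (n : ℕ) (g : Polynomial F) :
    Set (Fin n → F) :=
  {c | g ∣ ∑ i : Fin n, C (c i) * X ^ (i : ℕ)}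

/-- Hamming weight of a vector. -/
def hammingWt {F : Type*} [Zero F] [DecidableEq F] {n : ℕ} (x : Fin n → F) : ℕ :=
  (Finset.univ.filter fun i => x i ≠ 0).card

section AuxStmt8

open Finset

variable {F : Type*} [Field F]


lemma theta_dvd (a : F) (k : ℕ) (Q : F[X]) (h : (X - C a) ^ (k + 1) ∣ Q) :
    (X - C a) ^ k ∣ X * derivative Q := by
  obtain ⟨q, rfl⟩ := h
  refine ⟨X * (C ((k : F) + 1) * q + (X - C a) * derivative q), ?_⟩
  rw [derivative_mul, derivative_pow, derivative_sub, derivative_X, derivative_C,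
    Nat.add_sub_cancel]
  push_cast
  ring

lemma root_iterate (a : F) (j k : ℕ) (Q : F[X])
    (h : (X - C a) ^ (j + k + 1) ∣ Q) :
    ((fun q : F[X] => X * derivative q)^[j] Q).eval a = 0 := by
  induction j generalizing Q with
  | zero =>
    have h1 : (X - C a) ∣ Q := dvd_trans (dvd_pow_self _ (Nat.succ_ne_zero _)) h
    simpa using dvd_iff_isRoot.mp h1
  | succ j ih =>
    rw [Function.iterate_succ_apply]
    refine ih (X * derivative Q) (theta_dvd a (j + k + 1) Q ?_)
    have : j + 1 + k + 1 = j + k + 1 + 1 := by omega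
    rwa [this] at h

lemma sum_theta (n : ℕ) (c : Fin n → F) (j : ℕ) :
    (fun q : F[X] => X * derivative q)^[j] (∑ i : Fin n, C (c i) * X ^ (i : ℕ))
      = ∑ i : Fin n, C (c i * ((i : ℕ) : F) ^ j) * X ^ (i : ℕ) := by
  induction j with
  | zero => simp
  | succ j ih =>
    rw [Function.iterate_succ_apply', ih, derivative_sum, Finset.mul_sum]
    refine Finset.sum_congr rfl fun i _ => ?_
    rw [derivative_C_mul_X_pow]
    rcases Nat.eq_zero_or_pos (i : ℕ) with h0 | hpos
    · simp [h0, pow_succ]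
    · obtain ⟨m, hm⟩ := Nat.exists_eq_add_of_lt hpos
      rw [hm]
      simp only [Nat.add_sub_cancel, zero_add]
      rw [pow_succ (X : F[X]) m]
      push_cast
      ring

lemma conditionA {n : ℕ} (c : Fin n → F) (a : F) (m j : ℕ) (hj : j < m)
    (hdvd : (X - C a) ^ m ∣ ∑ i : Fin n, C (c i) * X ^ (i : ℕ)) :
    ∑ i : Fin n, c i * ((i : ℕ) : F) ^ j * a ^ (i : ℕ) = 0 := by
  have hm : j + (m - j - 1) + 1 = m := by omega
  have h1 := root_iterate a j (m - j - 1) (∑ i : Fin n, C (c i) * X ^ (i : ℕ))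
    (by rw [hm]; exact hdvd)
  rw [sum_theta] at h1
  rw [eval_finset_sum] at h1
  simpa [mul_assoc] using h1


lemma class_sum_eq_zero {ι : Type*} (s : Finset ι) (t : ι → F) (ρ : ι → ℕ)
    (hρ : ∀ i ∈ s, ρ i < 3)
    (ω : F) (hω3 : ω ^ 3 = 1) (hquad : ω ^ 2 + ω + 1 = 0) (h3 : (3 : F) ≠ 0)
    (h0 : ∑ i ∈ s, t i = 0) (h1 : ∑ i ∈ s, t i * ω ^ (ρ i) = 0)
    (h2 : ∑ i ∈ s, t i * ω ^ (2 * ρ i) = 0) (r : ℕ) (hr : r < 3) :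
    ∑ i ∈ s.filter (fun i => ρ i = r), t i = 0 := by
  classical
  have ωpow : ∀ m : ℕ, ω ^ m = ω ^ (m % 3) := by
    intro m
    conv_lhs => rw [← Nat.div_add_mod m 3]
    rw [pow_add, pow_mul, hω3, one_pow, one_mul]
  have key : ∀ i ∈ s, t i * (1 + ω ^ (3 - r) * ω ^ (ρ i) + ω ^ (2 * (3 - r)) * ω ^ (2 * ρ i))
      = if ρ i = r then (3 : F) * t i else 0 := by
    intro i hi
    have hu : ρ i < 3 := hρ i hi
    revert hu
    generalize ρ i = u
    intro hu
    have h4 : ω ^ 4 = ω := by rw [ωpow]; norm_num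
    have h5 : ω ^ 5 = ω ^ 2 := by rw [ωpow]
    have h6 : ω ^ 6 = 1 := by rw [ωpow]; norm_num
    have h7 : ω ^ 7 = ω := by rw [ωpow]; norm_num
    have h8 : ω ^ 8 = ω ^ 2 := by rw [ωpow]
    have h9 : ω ^ 9 = 1 := by rw [ωpow]; norm_num
    have h10 : ω ^ 10 = ω := by rw [ωpow]; norm_num
    interval_cases u <;> interval_cases r <;>
      norm_num [← pow_add] <;>
      first
        | exact Or.inr (by linear_combination hquad)
        | exact Or.inr (by linear_combination hquad + ω * hω3)
        | exact Or.inr (by linear_combination hquad + (ω + ω^5 + ω^2) * hω3)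
        | exact Or.inr (by linear_combination hquad + (ω^2 + ω^7 + ω^4 + ω) * hω3)
        | linear_combination (t i * (ω^3+2)) * hω3
  have H : (3 : F) * ∑ i ∈ s.filter (fun i => ρ i = r), t i = 0 := by
    calc (3 : F) * ∑ i ∈ s.filter (fun i => ρ i = r), t i
        = ∑ i ∈ s.filter (fun i => ρ i = r), (3 : F) * t i := by rw [Finset.mul_sum]
      _ = ∑ i ∈ s, (if ρ i = r then (3 : F) * t i else 0) := by rw [Finset.sum_filter]
      _ = ∑ i ∈ s, t i * (1 + ω ^ (3 - r) * ω ^ (ρ i) + ω ^ (2 * (3 - r)) * ω ^ (2 * ρ i)) :=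
          Finset.sum_congr rfl fun i hi => (key i hi).symm
      _ = (∑ i ∈ s, t i) + ω ^ (3 - r) * (∑ i ∈ s, t i * ω ^ (ρ i))
            + ω ^ (2 * (3 - r)) * (∑ i ∈ s, t i * ω ^ (2 * ρ i)) := by
          rw [Finset.mul_sum, Finset.mul_sum, ← Finset.sum_add_distrib, ← Finset.sum_add_distrib]
          exact Finset.sum_congr rfl fun i _ => by ring
      _ = 0 := by rw [h0, h1, h2]; ring
  exact (mul_eq_zero.mp H).resolve_left h3

lemma vdm {ι : Type*} [DecidableEq ι] (s : Finset ι) (b : ι → F) (x : ι → F)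
    (hinj : ∀ i ∈ s, ∀ j ∈ s, x i = x j → i = j) (hcard : s.card ≤ 4)
    (h : ∀ j : ℕ, j ≤ 3 → ∑ i ∈ s, b i * x i ^ j = 0) : ∀ i ∈ s, b i = 0 := by
  intro i₀ hi₀
  set R : F[X] := ∏ k ∈ s.erase i₀, (X - C (x k)) with hR
  have hdeg : R.natDegree ≤ 3 := by
    have h1 : R.natDegree = ∑ k ∈ s.erase i₀, (X - C (x k)).natDegree :=
      natDegree_prod _ _ fun k _ => X_sub_C_ne_zero _
    have h2 : (s.erase i₀).card ≤ 3 := by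
      have := Finset.card_erase_of_mem hi₀
      omega
    simp only [natDegree_X_sub_C] at h1
    rw [h1, Finset.sum_const, smul_eq_mul, mul_one]
    exact h2
  have keval : ∀ k, R.eval (x k) = ∏ m ∈ s.erase i₀, (x k - x m) := by
    intro k; rw [hR, eval_prod]; exact Finset.prod_congr rfl fun m _ => by simp
  have hsum : ∑ k ∈ s, b k * R.eval (x k) = 0 := by
    calc ∑ k ∈ s, b k * R.eval (x k)
        = ∑ k ∈ s, ∑ j ∈ Finset.range (R.natDegree + 1), R.coeff j * (b k * x k ^ j) := by
          refine Finset.sum_congr rfl fun k _ => ?_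
          rw [eval_eq_sum_range, Finset.mul_sum]
          exact Finset.sum_congr rfl fun j _ => by ring
      _ = ∑ j ∈ Finset.range (R.natDegree + 1), R.coeff j * ∑ k ∈ s, b k * x k ^ j := by
          rw [Finset.sum_comm]
          exact Finset.sum_congr rfl fun j _ => by rw [Finset.mul_sum]
      _ = 0 := by
          refine Finset.sum_eq_zero fun j hj => ?_
          have hj3 : j ≤ 3 := by
            have := Finset.mem_range.mp hj; omega
          rw [h j hj3, mul_zero]
  have hzero : ∀ k ∈ s.erase i₀, b k * R.eval (x k) = 0 := by
    intro k hk
    rw [keval, Finset.prod_eq_zero hk (sub_self (x k)), mul_zero]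
  have hmain : b i₀ * R.eval (x i₀) = 0 := by
    rw [← Finset.add_sum_erase s _ hi₀] at hsum
    rw [Finset.sum_eq_zero hzero, add_zero] at hsum
    exact hsum
  have hne : R.eval (x i₀) ≠ 0 := by
    rw [keval]
    refine Finset.prod_ne_zero_iff.mpr fun m hm => sub_ne_zero.mpr fun he => ?_
    exact (Finset.ne_of_mem_erase hm).symm
      (hinj i₀ hi₀ m (Finset.mem_of_mem_erase hm) he)
  exact (mul_eq_zero.mp hmain).resolve_right hne

end AuxStmt8

theorem stmt8 (p : ℕ) [Fact p.Prime] (hodd : Odd p) (h3 : 3 ∣ p - 1)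
    (ω : ZMod p) (hω3 : ω ^ 3 = 1) (hω1 : ω ≠ 1) :
    IsLeast {w : ℕ | ∃ c ∈ cyclicCode (3 * p)
        ((X - 1) ^ 4 * (X - C ω) ^ 2 * (X - C (ω ^ 2)) ^ 2),
      c ≠ 0 ∧ hammingWt c = w} 5 := by
  have hp : p.Prime := Fact.out
  have hp2 := hp.two_le
  have hp7 : 7 ≤ p := by
    by_contra hlt7
    push_neg at hlt7
    interval_cases p
    · omega
    · omega
    · exact absurd hp (by norm_num)
    · omega
    · exact absurd hp (by norm_num)
  have h3p : Nat.Coprime 3 p := (Nat.coprime_primes (by norm_num) hp).mpr (by omega)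
  have hquad : ω ^ 2 + ω + 1 = 0 := by
    have hz : (ω - 1) * (ω ^ 2 + ω + 1) = 0 := by linear_combination hω3
    rcases mul_eq_zero.mp hz with h1 | h2
    · exact absurd (by linear_combination h1 : ω = 1) hω1
    · exact h2
  have hneN : ∀ m : ℕ, 0 < m → m < 7 → ((m : ℕ) : ZMod p) ≠ 0 := by
    intro m h1 h2
    rw [Ne, ZMod.natCast_eq_zero_iff]
    intro hd
    have := Nat.le_of_dvd h1 hd
    omega
  have h3F : (3 : ZMod p) ≠ 0 := by
    have := hneN 3 (by norm_num) (by norm_num); simpa using this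
  have h4F : (4 : ZMod p) ≠ 0 := by
    have := hneN 4 (by norm_num) (by norm_num); simpa using this
  have h6F : (6 : ZMod p) ≠ 0 := by
    have := hneN 6 (by norm_num) (by norm_num); simpa using this
  have ωpow : ∀ m : ℕ, ω ^ m = ω ^ (m % 3) := by
    intro m
    conv_lhs => rw [← Nat.div_add_mod m 3]
    rw [pow_add, pow_mul, hω3, one_pow, one_mul]
  have hω2i : ∀ m : ℕ, (ω ^ 2) ^ m = ω ^ (2 * (m % 3)) := by
    intro m
    rw [← pow_mul, ωpow (2 * m), ωpow (2 * (m % 3))]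
    congr 1
    omega
  set g : (ZMod p)[X] := (X - 1) ^ 4 * (X - C ω) ^ 2 * (X - C (ω ^ 2)) ^ 2 with hg
  have hyC : (C ω) ^ 2 + C ω + 1 = (0 : (ZMod p)[X]) := by
    have h := congrArg (C : ZMod p →+* (ZMod p)[X]).toFun hquad
    simpa [map_add, map_pow] using h
  have hfact : (X - 1) * (X - C ω) * (X - C (ω ^ 2)) = (X ^ 3 - 1 : (ZMod p)[X]) := by
    rw [map_pow]
    linear_combination (-(X ^ 2) + C ω * X + 1 - C ω) * hyC
  have hdvdg : g ∣ (X ^ 3 - 1 : (ZMod p)[X]) ^ 4 := by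
    have he : ((X : (ZMod p)[X]) ^ 3 - 1) ^ 4
        = (X - 1) ^ 4 * (X - C ω) ^ 4 * (X - C (ω ^ 2)) ^ 4 := by
      rw [← hfact]; ring
    rw [he, hg]
    exact mul_dvd_mul (mul_dvd_mul_left _ (pow_dvd_pow _ (by norm_num)))
      (pow_dvd_pow _ (by norm_num))
  -- the weight-5 codeword (X^3-1)^4
  set c' : ℕ → ZMod p := fun i =>
    if i = 0 then 1 else if i = 3 then -4 else if i = 6 then 6 else
    if i = 9 then -4 else if i = 12 then 1 else 0 with hc'
  set cw : Fin (3 * p) → ZMod p := fun i => c' (i : ℕ) with hcw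
  have hsum : (∑ i : Fin (3 * p), C (cw i) * X ^ (i : ℕ))
      = ((X : (ZMod p)[X]) ^ 3 - 1) ^ 4 := by
    rw [show (∑ i : Fin (3 * p), C (cw i) * X ^ (i : ℕ))
        = ∑ i ∈ Finset.range (3 * p), C (c' i) * X ^ i
      from Fin.sum_univ_eq_sum_range (fun i => C (c' i) * X ^ i) (3 * p)]
    have hsub : ({0, 3, 6, 9, 12} : Finset ℕ) ⊆ Finset.range (3 * p) := by
      intro x hx
      simp only [Finset.mem_insert, Finset.mem_singleton] at hx
      rw [Finset.mem_range]
      rcases hx with rfl | rfl | rfl | rfl | rfl <;> omega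
    rw [← Finset.sum_subset hsub (by
      intro x _ hnx
      simp only [Finset.mem_insert, Finset.mem_singleton, not_or] at hnx
      obtain ⟨e0, e3, e6, e9, e12⟩ := hnx
      simp [hc', e0, e3, e6, e9, e12])]
    norm_num [hc', Finset.sum_insert, Finset.mem_insert, Finset.mem_singleton]
    simp only [map_one, map_neg, map_ofNat]
    ring
  have hmemcw : cw ∈ cyclicCode (3 * p) g := by
    simp only [cyclicCode, Set.mem_setOf_eq]
    rw [hsum]
    exact hdvdg
  have hcwne : cw ≠ 0 := by
    intro h
    have h0 : cw ⟨0, by omega⟩ = 0 := by rw [h]; rfl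
    simp [hcw, hc'] at h0
  have hchar : ∀ x : ℕ, c' x ≠ 0 ↔ (x = 0 ∨ x = 3 ∨ x = 6 ∨ x = 9 ∨ x = 12) := by
    intro x
    constructor
    · intro h
      by_contra hn
      push_neg at hn
      obtain ⟨e0, e3, e6, e9, e12⟩ := hn
      simp [hc', e0, e3, e6, e9, e12] at h
    · rintro (rfl | rfl | rfl | rfl | rfl) <;> simp only [hc'] <;> norm_num <;> first | exact h4F | exact h6F
  have hwt5 : hammingWt cw = 5 := by
    have hfe : (Finset.univ.filter fun i : Fin (3 * p) => cw i ≠ 0) =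
        ({⟨0, by omega⟩, ⟨3, by omega⟩, ⟨6, by omega⟩, ⟨9, by omega⟩, ⟨12, by omega⟩}
          : Finset (Fin (3 * p))) := by
      ext i
      simp only [Finset.mem_filter, Finset.mem_univ, true_and, Finset.mem_insert,
        Finset.mem_singleton, hcw, hchar, Fin.ext_iff]
    rw [hammingWt, hfe]
    rw [Finset.card_insert_of_notMem (by norm_num [Fin.ext_iff]),
      Finset.card_insert_of_notMem (by norm_num [Fin.ext_iff]),
      Finset.card_insert_of_notMem (by norm_num [Fin.ext_iff]),
      Finset.card_insert_of_notMem (by norm_num [Fin.ext_iff]),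
      Finset.card_singleton]
  constructor
  · exact ⟨cw, hmemcw, hcwne, hwt5⟩
  -- lower bound
  rintro w ⟨c, hmemc, hcne, rfl⟩
  by_contra hlt
  push_neg at hlt
  set s : Finset (Fin (3 * p)) := Finset.univ.filter (fun i => c i ≠ 0) with hs
  have hcard : s.card ≤ 4 := by
    have he : hammingWt c = s.card := rfl
    omega
  have hmem' : g ∣ ∑ i : Fin (3 * p), C (c i) * X ^ (i : ℕ) := hmemc
  have hd1 : (X - C (1 : ZMod p)) ^ 4 ∣ ∑ i : Fin (3 * p), C (c i) * X ^ (i : ℕ) := by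
    rw [map_one]
    exact dvd_trans (dvd_mul_of_dvd_left (dvd_mul_right _ _) _) hmem'
  have hdω : (X - C ω) ^ 2 ∣ ∑ i : Fin (3 * p), C (c i) * X ^ (i : ℕ) :=
    dvd_trans (dvd_mul_of_dvd_left (dvd_mul_left _ _) _) hmem'
  have hdω2 : (X - C (ω ^ 2)) ^ 2 ∣ ∑ i : Fin (3 * p), C (c i) * X ^ (i : ℕ) :=
    dvd_trans (dvd_mul_left _ _) hmem'
  have hrestrict : ∀ f : Fin (3 * p) → ZMod p,
      ∑ i ∈ s, c i * f i = ∑ i : Fin (3 * p), c i * f i := by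
    intro f
    exact Finset.sum_filter_of_ne fun x _ hx h0 => hx (by rw [h0, zero_mul])
  have S1 : ∀ j : ℕ, j ≤ 3 → ∑ i ∈ s, c i * (((i : ℕ) : ZMod p)) ^ j = 0 := by
    intro j hj
    have h := conditionA c 1 4 j (by omega) hd1
    simp only [one_pow, mul_one] at h
    rw [hrestrict (fun i => ((i : ℕ) : ZMod p) ^ j)]
    exact h
  have U : ∀ j : ℕ, j ≤ 1 → ∀ r : ℕ, r < 3 →
      ∑ i ∈ s.filter (fun i : Fin (3 * p) => (i : ℕ) % 3 = r), c i * (((i : ℕ) : ZMod p)) ^ j = 0 := by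
    intro j hj r hr
    have h0 : ∑ i ∈ s, c i * (((i : ℕ) : ZMod p)) ^ j = 0 := S1 j (by omega)
    have h1 : ∑ i ∈ s, c i * (((i : ℕ) : ZMod p)) ^ j * ω ^ ((i : ℕ) % 3) = 0 := by
      have h := conditionA c ω 2 j (by omega) hdω
      calc ∑ i ∈ s, c i * (((i : ℕ) : ZMod p)) ^ j * ω ^ ((i : ℕ) % 3)
          = ∑ i ∈ s, c i * ((((i : ℕ) : ZMod p)) ^ j * ω ^ ((i : ℕ) % 3)) :=
            Finset.sum_congr rfl fun i _ => by ring
        _ = ∑ i : Fin (3 * p), c i * ((((i : ℕ) : ZMod p)) ^ j * ω ^ ((i : ℕ) % 3)) :=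
            hrestrict _
        _ = ∑ i : Fin (3 * p), c i * (((i : ℕ) : ZMod p)) ^ j * ω ^ (i : ℕ) :=
            Finset.sum_congr rfl fun i _ => by rw [ωpow ((i : ℕ))]; ring
        _ = 0 := h
    have h2 : ∑ i ∈ s, c i * (((i : ℕ) : ZMod p)) ^ j * ω ^ (2 * ((i : ℕ) % 3)) = 0 := by
      have h := conditionA c (ω ^ 2) 2 j (by omega) hdω2
      calc ∑ i ∈ s, c i * (((i : ℕ) : ZMod p)) ^ j * ω ^ (2 * ((i : ℕ) % 3))
          = ∑ i ∈ s, c i * ((((i : ℕ) : ZMod p)) ^ j * ω ^ (2 * ((i : ℕ) % 3))) :=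
            Finset.sum_congr rfl fun i _ => by ring
        _ = ∑ i : Fin (3 * p), c i * ((((i : ℕ) : ZMod p)) ^ j * ω ^ (2 * ((i : ℕ) % 3))) :=
            hrestrict _
        _ = ∑ i : Fin (3 * p), c i * (((i : ℕ) : ZMod p)) ^ j * (ω ^ 2) ^ (i : ℕ) :=
            Finset.sum_congr rfl fun i _ => by rw [hω2i ((i : ℕ))]; ring
        _ = 0 := h
    exact class_sum_eq_zero s (fun i => c i * (((i : ℕ) : ZMod p)) ^ j)
      (fun i => (i : ℕ) % 3) (fun i _ => Nat.mod_lt _ (by norm_num))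
      ω hω3 hquad h3F h0 h1 h2 r hr
  have hinj : ∀ i j : Fin (3 * p), (i : ℕ) % 3 = (j : ℕ) % 3 →
      (((i : ℕ) : ZMod p) = ((j : ℕ) : ZMod p)) → i = j := by
    intro i j hmod hcast
    have hpmod : (i : ℕ) ≡ (j : ℕ) [MOD p] := (ZMod.natCast_eq_natCast_iff _ _ _).mp hcast
    have h3mod : (i : ℕ) ≡ (j : ℕ) [MOD 3] := hmod
    have hall : (i : ℕ) ≡ (j : ℕ) [MOD 3 * p] :=
      (Nat.modEq_and_modEq_iff_modEq_mul h3p).mp ⟨h3mod, hpmod⟩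
    have hi := i.isLt
    have hj := j.isLt
    have heq : (i : ℕ) % (3 * p) = (j : ℕ) % (3 * p) := hall
    rw [Nat.mod_eq_of_lt hi, Nat.mod_eq_of_lt hj] at heq
    exact Fin.ext heq
  have hmemS : ∀ i ∈ s, c i ≠ 0 := fun i hi => (Finset.mem_filter.mp hi).2
  have hsmall : ∀ r : ℕ, r < 3 →
      (s.filter (fun i : Fin (3 * p) => (i : ℕ) % 3 = r)).card ≠ 1 ∧
      (s.filter (fun i : Fin (3 * p) => (i : ℕ) % 3 = r)).card ≠ 2 := by
    intro r hr
    constructor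
    · intro h1c
      obtain ⟨i, hi⟩ := Finset.card_eq_one.mp h1c
      have hU := U 0 (by omega) r hr
      rw [hi, Finset.sum_singleton] at hU
      simp only [pow_zero, mul_one] at hU
      have him : i ∈ s := Finset.filter_subset _ _ (hi ▸ Finset.mem_singleton_self i)
      exact hmemS i him hU
    · intro h2c
      obtain ⟨i, j, hij, hpair⟩ := Finset.card_eq_two.mp h2c
      have hU0 := U 0 (by omega) r hr
      have hU1 := U 1 (by omega) r hr
      rw [hpair, Finset.sum_pair hij] at hU0 hU1
      simp only [pow_zero, mul_one, pow_one] at hU0 hU1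
      have hi_mem : i ∈ s.filter (fun i : Fin (3 * p) => (i : ℕ) % 3 = r) := by
        rw [hpair]; exact Finset.mem_insert_self _ _
      have hj_mem : j ∈ s.filter (fun i : Fin (3 * p) => (i : ℕ) % 3 = r) := by
        rw [hpair]; exact Finset.mem_insert_of_mem (Finset.mem_singleton_self _)
      obtain ⟨his, hri⟩ := Finset.mem_filter.mp hi_mem
      obtain ⟨hjs, hrj⟩ := Finset.mem_filter.mp hj_mem
      have hxy : (((i : ℕ) : ZMod p)) ≠ (((j : ℕ) : ZMod p)) := fun he =>
        hij (hinj i j (by rw [hri, hrj]) he)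
      have hzero : c i * ((((i : ℕ) : ZMod p)) - (((j : ℕ) : ZMod p))) = 0 := by
        linear_combination hU1 - (((j : ℕ) : ZMod p)) * hU0
      rcases mul_eq_zero.mp hzero with hc0 | hd0
      · exact hmemS i his hc0
      · exact hxy (sub_eq_zero.mp hd0)
  have hnonempty : s.Nonempty := by
    rcases Function.ne_iff.mp hcne with ⟨i, hi⟩
    refine ⟨i, Finset.mem_filter.mpr ⟨Finset.mem_univ _, ?_⟩⟩
    simpa using hi
  have hfib : (s.filter (fun i : Fin (3 * p) => (i : ℕ) % 3 = 0)).card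
      + (s.filter (fun i : Fin (3 * p) => (i : ℕ) % 3 = 1)).card
      + (s.filter (fun i : Fin (3 * p) => (i : ℕ) % 3 = 2)).card = s.card := by
    have h := Finset.card_eq_sum_card_fiberwise
      (f := fun i : Fin (3 * p) => (i : ℕ) % 3) (s := s) (t := Finset.range 3)
      (fun x _ => Finset.mem_range.mpr (Nat.mod_lt _ (by norm_num)))
    rw [h, Finset.sum_range_succ, Finset.sum_range_succ, Finset.sum_range_one]
  have hposcard : 1 ≤ s.card := Finset.card_pos.mpr hnonempty
  have final : ∀ r : ℕ, (s.filter (fun i : Fin (3 * p) => (i : ℕ) % 3 = r)).card = s.card → False := by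
    intro r hrc
    have hseq : s.filter (fun i : Fin (3 * p) => (i : ℕ) % 3 = r) = s :=
      Finset.eq_of_subset_of_card_le (Finset.filter_subset _ _) (le_of_eq hrc.symm)
    have hallr : ∀ i ∈ s, (i : ℕ) % 3 = r := by
      intro i hi
      have hi' : i ∈ s.filter (fun i : Fin (3 * p) => (i : ℕ) % 3 = r) := by
        rw [hseq]; exact hi
      exact (Finset.mem_filter.mp hi').2
    have hz := vdm s c (fun i => ((i : ℕ) : ZMod p))
      (fun i hi j hj he => hinj i j (by rw [hallr i hi, hallr j hj]) he) hcard S1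
    obtain ⟨i, hi⟩ := hnonempty
    exact hmemS i hi (hz i hi)
  have h0s := hsmall 0 (by norm_num)
  have h1s := hsmall 1 (by norm_num)
  have h2s := hsmall 2 (by norm_num)
  have hone : (s.filter (fun i : Fin (3 * p) => (i : ℕ) % 3 = 0)).card = s.card ∨
      (s.filter (fun i : Fin (3 * p) => (i : ℕ) % 3 = 1)).card = s.card ∨
      (s.filter (fun i : Fin (3 * p) => (i : ℕ) % 3 = 2)).card = s.card := by omega
  rcases hone with h | h | h
  · exact final 0 h
  · exact final 1 h
  · exact final 2 h
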